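/- arXiv:2603.28536 — 2 statements merged into one kernel-verified Lean document; each statement's English description precedes it below -/
import Mathlib

section
/- Let K be a number field with ring of integers 𝓞_K, let I be a nonzero ideal of 𝓞_K regarded as an 𝓞_K-module, let α ∈ I be nonzero, and let m ≥ 1. Suppose β is an element of the m-th tensor power I^{⊗m} over 𝓞_K which generates I^{⊗m} as an 𝓞_K-module, and let t ∈ 𝓞_K be such that t·β = α^{⊗m}. Then ∏_{σ : K → ℂ} |σ(t)|^{1/m} = #(I/𝓞_K·α), where the product is over all ring embeddings σ : K → ℂ. -/
open scoped TensorProduct PiTensorProduct Pointwise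

/-- The `n`-th power of an ideal is spanned by `n`-fold products of its elements. -/
lemma pow_eq_span_range_prod {R : Type*} [CommRing R] (I : Ideal R) (n : ℕ) :
    I ^ n = Ideal.span (Set.range fun x : Fin n → I => ∏ i, (x i : R)) := by
  induction n with
  | zero =>
    have h : (Set.range fun x : Fin 0 → I => ∏ i, (x i : R)) = {1} := by
      ext r
      simp [eq_comm]
    rw [pow_zero, h, Ideal.span_singleton_one, Ideal.one_eq_top]
  | succ n ih =>
    have hset : ((I : Set R) * Set.range (fun x : Fin n → I => ∏ i, (x i : R)))
        = Set.range (fun x : Fin (n + 1) → I => ∏ i, (x i : R)) := by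
      ext r
      rw [Set.mem_mul]
      constructor
      · rintro ⟨a, ha, p, ⟨v, rfl⟩, rfl⟩
        exact ⟨Fin.cons ⟨a, ha⟩ v, by simp [Fin.prod_univ_succ]⟩
      · rintro ⟨v, rfl⟩
        refine ⟨(v 0 : R), (v 0).2, ∏ i : Fin n, (Fin.tail v i : R), ⟨Fin.tail v, rfl⟩, ?_⟩
        simp [Fin.prod_univ_succ, Fin.tail]
    calc I ^ (n + 1) = I * I ^ n := pow_succ' I n
      _ = Ideal.span (I : Set R) * Ideal.span (Set.range fun x : Fin n → I => ∏ i, (x i : R)) := by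
          rw [ih, Ideal.span_eq]
      _ = Ideal.span ((I : Set R) * Set.range fun x : Fin n → I => ∏ i, (x i : R)) :=
          Ideal.span_mul_span' _ _
      _ = _ := by rw [hset]

/-- The product of the absolute values of the images of `x` under all complex embeddings is
the absolute value of its rational norm. -/
lemma prod_abs_embeddings_eq_abs_norm {K : Type*} [Field K] [NumberField K] (x : K) :
    ∏ σ : K →+* ℂ, ‖σ x‖ = |((Algebra.norm ℚ x : ℚ) : ℝ)| := by
  have h := congr_arg (‖·‖) (Algebra.norm_eq_prod_embeddings ℚ ℂ x)
  rw [norm_prod] at h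
  rw [show (∏ σ : K →+* ℂ, ‖σ x‖) = ∏ σ : K →ₐ[ℚ] ℂ, ‖σ x‖ from
      Fintype.prod_equiv (RingHom.equivRatAlgHom K ℂ) _ _
        (fun _ => by simp [RingHom.equivRatAlgHom_apply]),
    ← h, eq_ratCast, ← Complex.ofReal_ratCast, Complex.norm_real, Real.norm_eq_abs]

/-- If `β` generates `I^{⊗m}` and `t • β = α^{⊗m}`, then
`(t) * I ^ m = (α) ^ m` as ideals. -/
lemma span_mul_pow_eq_span_pow {R K : Type*} [CommRing R] [CommRing K] [Algebra R K]
    (halg : Function.Injective (algebraMap R K))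
    (I : Ideal R) (α : I) (m : ℕ)
    (β : ⨂[R]^m I) (hβ : Submodule.span R {β} = ⊤)
    (t : R) (ht : t • β = PiTensorProduct.tprod R (fun _ : Fin m => α)) :
    Ideal.span {t} * I ^ m = Ideal.span {(α : R)} ^ m := by
  have halg' : Function.Injective (Algebra.linearMap R K) := halg
  set F : (⨂[R]^m I) →ₗ[R] K := PiTensorProduct.lift
    ((MultilinearMap.mkPiAlgebra R (Fin m) K).compLinearMap
      (fun _ => (Algebra.linearMap R K).comp (Submodule.subtype I))) with hF
  have hFtprod : ∀ x : Fin m → I,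
      F (PiTensorProduct.tprod R x) = ∏ i, algebraMap R K (x i) := by
    intro x
    simp [hF]
  have hb1 : Submodule.map F ⊤ = Submodule.span R {F β} := by
    rw [← hβ, Submodule.map_span, Set.image_singleton]
  have hb2 : Submodule.map F ⊤
      = Submodule.span R (Set.range fun x : Fin m → I => ∏ i, algebraMap R K (x i)) := by
    rw [← PiTensorProduct.span_tprod_eq_top, Submodule.map_span, ← Set.range_comp]
    congr 1
    ext y
    constructor
    · rintro ⟨x, rfl⟩; exact ⟨x, (hFtprod x).symm⟩
    · rintro ⟨x, rfl⟩; exact ⟨x, hFtprod x⟩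
  have hmap : Submodule.map (Algebra.linearMap R K) (I ^ m)
      = Submodule.span R (Set.range fun x : Fin m → I => ∏ i, algebraMap R K (x i)) := by
    rw [pow_eq_span_range_prod, ← Ideal.submodule_span_eq, Submodule.map_span, ← Set.range_comp]
    congr 1
    ext y
    constructor
    · rintro ⟨x, rfl⟩; exact ⟨x, (map_prod (algebraMap R K) _ _).symm⟩
    · rintro ⟨x, rfl⟩; exact ⟨x, map_prod (algebraMap R K) _ _⟩
  have hspan : Submodule.span R {F β} = Submodule.map (Algebra.linearMap R K) (I ^ m) := by
    rw [← hb1, hb2, hmap]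
  have heq : algebraMap R K t * F β = algebraMap R K (α : R) ^ m := by
    have h := congr_arg F ht
    rw [map_smul, hFtprod] at h
    rw [← Algebra.smul_def, h]
    simp
  apply Submodule.map_injective_of_injective halg'
  have e : Algebra.linearMap R K = (Algebra.ofId R K).toLinearMap := rfl
  have h1 : Submodule.map (Algebra.linearMap R K) (Ideal.span {t})
      = Submodule.span R {algebraMap R K t} := by
    rw [← Ideal.submodule_span_eq, Submodule.map_span, Set.image_singleton]; rfl
  have h2 : Submodule.map (Algebra.linearMap R K) (Ideal.span {(α : R)})
      = Submodule.span R {algebraMap R K (α : R)} := by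
    rw [← Ideal.submodule_span_eq, Submodule.map_span, Set.image_singleton]; rfl
  have sp1 : ∀ a b : K, Submodule.span R {a} * Submodule.span R {b} = Submodule.span R {a * b} :=
    fun a b => by rw [Submodule.span_mul_span, Set.singleton_mul_singleton]
  have sp2 : ∀ (a : K) (n : ℕ), Submodule.span R {a} ^ n = Submodule.span R {a ^ n} :=
    fun a n => by rw [Submodule.span_pow, Set.singleton_pow]
  rw [e, Submodule.map_mul, ← e, h1, ← hspan, sp1, heq, ← sp2, ← h2, e, Submodule.map_pow]

/-- Multiplicativity of the cardinality of quotients. -/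
lemma card_quot_span_eq_mul {R : Type*} [CommRing R] (I : Ideal R) (α : I) :
    Nat.card (R ⧸ Ideal.span {(α : R)})
      = Nat.card (I ⧸ Submodule.span R {α}) * Nat.card (R ⧸ I) := by
  set J : Ideal R := Ideal.span {(α : R)} with hJ
  have hJI : J ≤ I := by
    rw [hJ, Ideal.span_le, Set.singleton_subset_iff]
    exact α.2
  have hcomap : Submodule.comap I.subtype J = Submodule.span R {α} := by
    apply Submodule.map_injective_of_injective I.injective_subtype
    rw [Submodule.map_comap_subtype, Submodule.map_span, Set.image_singleton]
    have h : I.subtype α = (α : R) := rfl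
    rw [h, inf_eq_right.mpr hJI, hJ, Ideal.submodule_span_eq]
  set g : I →ₗ[R] R ⧸ J := J.mkQ.comp I.subtype with hg
  have hker : LinearMap.ker g = Submodule.span R {α} := by
    rw [hg, LinearMap.ker_comp, Submodule.ker_mkQ, hcomap]
  have hrange : LinearMap.range g = Submodule.map J.mkQ I := by
    rw [hg, LinearMap.range_comp, Submodule.range_subtype]
  have e1 : (I ⧸ Submodule.span R {α}) ≃ₗ[R] Submodule.map J.mkQ I := by
    rw [← hker, ← hrange]; exact g.quotKerEquivRange
  have e2 : ((R ⧸ J) ⧸ Submodule.map J.mkQ (I : Submodule R R)) ≃ₗ[R] R ⧸ (I : Submodule R R) :=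
    Submodule.quotientQuotientEquivQuotient (J : Submodule R R) I hJI
  have h := Submodule.card_eq_card_quotient_mul_card (Submodule.map J.mkQ (I : Submodule R R))
  rw [Nat.card_congr e2.toEquiv] at h
  rw [h, ← Nat.card_congr e1.toEquiv]

set_option synthInstance.maxHeartbeats 400000 in
/-- If `β` generates the `m`-th tensor power `I^{⊗m}` of a nonzero ideal `I` of the ring
of integers of a number field, and `t·β = α^{⊗m}` for a nonzero `α ∈ I`, then
`∏_σ |σ(t)|^(1/m) = #(I/𝓞_K·α)`, the product running over all embeddings `σ : K → ℂ`. -/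
theorem prod_abs_rpow_eq_card_quotient
    (K : Type*) [Field K] [NumberField K]
    (I : Ideal (NumberField.RingOfIntegers K)) (hI : I ≠ 0)
    (α : I) (hα : α ≠ 0) (m : ℕ) (hm : 1 ≤ m)
    (β : ⨂[NumberField.RingOfIntegers K]^m I)
    (hβ : Submodule.span (NumberField.RingOfIntegers K) {β} = ⊤)
    (t : NumberField.RingOfIntegers K)
    (ht : t • β = PiTensorProduct.tprod (NumberField.RingOfIntegers K) (fun _ : Fin m => α)) :
    ∏ σ : K →+* ℂ, ‖σ (t : K)‖ ^ ((m : ℝ))⁻¹ =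
      Nat.card (I ⧸ Submodule.span (NumberField.RingOfIntegers K) {α}) := by
  have key := span_mul_pow_eq_span_pow (K := K)
    (IsFractionRing.injective (NumberField.RingOfIntegers K) K) I α m β hβ t ht
  have hnorm : Ideal.absNorm (Ideal.span {t}) * Ideal.absNorm I ^ m
      = Ideal.absNorm (Ideal.span {(α : NumberField.RingOfIntegers K)}) ^ m := by
    have h := congr_arg Ideal.absNorm key
    rwa [_root_.map_mul Ideal.absNorm, _root_.map_pow Ideal.absNorm,
      _root_.map_pow Ideal.absNorm] at h
  set c : ℕ := Nat.card (I ⧸ Submodule.span (NumberField.RingOfIntegers K) {α}) with hc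
  have hcard : Ideal.absNorm (Ideal.span {(α : NumberField.RingOfIntegers K)})
      = c * Ideal.absNorm I := by
    rw [Ideal.absNorm_apply, Submodule.cardQuot_apply, card_quot_span_eq_mul I α,
      Ideal.absNorm_apply, Submodule.cardQuot_apply]
  have hInz : Ideal.absNorm I ≠ 0 := by
    rw [Ne, Ideal.absNorm_eq_zero_iff]
    simpa using hI
  have ht' : Ideal.absNorm (Ideal.span {t}) = c ^ m := by
    have h : Ideal.absNorm (Ideal.span {t}) * Ideal.absNorm I ^ m
        = c ^ m * Ideal.absNorm I ^ m := by
      rw [hnorm, hcard, mul_pow]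
    exact Nat.eq_of_mul_eq_mul_right (Nat.pos_of_ne_zero (pow_ne_zero m hInz)) h
  have hmne : (m : ℝ) ≠ 0 := Nat.cast_ne_zero.mpr (by omega)
  rw [Real.finset_prod_rpow _ _ (fun _ _ => norm_nonneg _) _,
    prod_abs_embeddings_eq_abs_norm]
  have habs : |((Algebra.norm ℚ ((t : NumberField.RingOfIntegers K) : K) : ℚ) : ℝ)|
      = ((c : ℝ) ^ (m : ℕ)) := by
    rw [← Algebra.coe_norm_int]
    have h2 : Ideal.absNorm (Ideal.span {t}) = (Algebra.norm ℤ t).natAbs :=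
      Ideal.absNorm_span_singleton t
    rw [ht'] at h2
    calc |((Algebra.norm ℤ t : ℚ) : ℝ)| = |((Algebra.norm ℤ t : ℤ) : ℝ)| := by norm_cast
      _ = ((Algebra.norm ℤ t).natAbs : ℝ) := by
          rw [← Int.cast_abs, Int.abs_eq_natAbs, Int.cast_natCast]
      _ = ((c : ℝ) ^ (m : ℕ)) := by rw [← h2]; push_cast; ring
  rw [habs, ← Real.rpow_natCast (c : ℝ) m, ← Real.rpow_mul (Nat.cast_nonneg c),
    mul_inv_cancel₀ hmne, Real.rpow_one]
end

section
/- Let E be a subfield of ℂ with [E : ℚ] = 2 which is not contained in ℝ (an imaginary quadratic field), and suppose z_E ∈ ℂ with Im(z_E) > 0 is such that the ring of integers 𝓞_E, viewed as an additive subgroup of ℂ, equals ℤz_E + ℤ. Let J be a fractional ideal of 𝓞_E with 𝓞_E ⊆ J, and suppose z ∈ ℂ with Im(z) > 0 is such that J, viewed as an additive subgroup of ℂ, equals ℤz + ℤ. Then the absolute norm of J satisfies N(J) = Im(z)/Im(z_E); equivalently, #(J/𝓞_E) = Im(z)/Im(z_E). -/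
open scoped nonZeroDivisors

set_option maxHeartbeats 2000000

/-- Let `E ⊆ ℂ` be an imaginary quadratic field whose ring of integers is the lattice
`ℤz_E + ℤ` (with `Im z_E > 0`), and let `J ⊇ 𝓞_E` be a fractional ideal which, as a
subset of `ℂ`, is the lattice `ℤz + ℤ` (with `Im z > 0`). Then `N(J) = Im z / Im z_E`. -/
theorem absNorm_fractionalIdeal_eq_ratio_of_im
    (E : Subfield ℂ) [NumberField ↥E]
    (hdeg : Module.finrank ℚ E = 2)
    (himag : ∃ x : E, (x : ℂ).im ≠ 0)
    (zE : ℂ) (hzE : 0 < zE.im)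
    (hOE : ∀ x : ℂ, x ∈ AddSubgroup.closure ({zE, 1} : Set ℂ) ↔
      ∃ a : NumberField.RingOfIntegers ↥E, ((a : ↥E) : ℂ) = x)
    (J : FractionalIdeal (NumberField.RingOfIntegers ↥E)⁰ ↥E) (hJ : 1 ≤ J)
    (z : ℂ) (hz : 0 < z.im)
    (hJz : ∀ x : ℂ, x ∈ AddSubgroup.closure ({z, 1} : Set ℂ) ↔
      ∃ a : ↥E, a ∈ J ∧ (a : ℂ) = x) :
    (FractionalIdeal.absNorm J : ℝ) = z.im / zE.im := by
  have hzE0 : zE.im ≠ 0 := ne_of_gt hzE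
  have hz0 : z.im ≠ 0 := ne_of_gt hz
  obtain ⟨ω, hω⟩ := (hOE zE).mp (AddSubgroup.subset_closure (Set.mem_insert _ _))
  obtain ⟨ζ, hζJ, hζ⟩ := (hJz z).mp (AddSubgroup.subset_closure (Set.mem_insert _ _))
  have im_comb : ∀ (m n : ℤ), ((m • zE + n • (1:ℂ)).im) = m * zE.im := by
    intro m n
    simp [Complex.add_im, Complex.intCast_im]
  have hEinj : Function.Injective (fun x : ↥E => (x : ℂ)) := Subtype.coe_injective
  have hOinj : Function.Injective (fun a : NumberField.RingOfIntegers ↥E => ((a : ↥E) : ℂ)) :=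
    hEinj.comp NumberField.RingOfIntegers.coe_injective
  -- basis of 𝓞_E
  have hliO : LinearIndependent ℤ ![ω, (1 : NumberField.RingOfIntegers ↥E)] := by
    rw [LinearIndependent.pair_iff]
    intro s t hst
    have h0 : ((((s • ω + t • 1 : NumberField.RingOfIntegers ↥E) : ↥E)) : ℂ) = 0 := by
      rw [hst]; push_cast; ring
    rw [show ((((s • ω + t • 1 : NumberField.RingOfIntegers ↥E) : ↥E)) : ℂ)
        = s • zE + t • (1:ℂ) by push_cast [hω]; ring] at h0
    have him := congrArg Complex.im h0
    rw [im_comb] at him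
    have hs : s = 0 := by simpa [hzE0] using him
    refine ⟨hs, ?_⟩
    have ht : ((t:ℂ)) = 0 := by rw [hs] at h0; simpa using h0
    exact_mod_cast ht
  have hspO : ⊤ ≤ Submodule.span ℤ (Set.range ![ω, (1 : NumberField.RingOfIntegers ↥E)]) := by
    rintro a -
    have hmem : ((a : ↥E) : ℂ) ∈ AddSubgroup.closure ({zE, 1} : Set ℂ) := (hOE _).mpr ⟨a, rfl⟩
    rw [AddSubgroup.mem_closure_pair] at hmem
    obtain ⟨m, n, hmn⟩ := hmem
    have ha : a = m • ω + n • 1 := by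
      apply hOinj
      show ((a : ↥E) : ℂ) = (((m • ω + n • 1 : NumberField.RingOfIntegers ↥E) : ↥E) : ℂ)
      rw [← hmn]
      push_cast [hω]
      try ring
    rw [ha]
    refine Submodule.add_mem _ (Submodule.smul_mem _ _ ?_) (Submodule.smul_mem _ _ ?_)
    · exact Submodule.subset_span ⟨0, rfl⟩
    · exact Submodule.subset_span ⟨1, rfl⟩
  let bO : Module.Basis (Fin 2) ℤ (NumberField.RingOfIntegers ↥E) := Module.Basis.mk hliO hspO
  -- basis of J, via its coercion to a submodule
  obtain ⟨M, hM⟩ : ∃ M : Submodule (NumberField.RingOfIntegers ↥E) ↥E,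
      M = (J : Submodule (NumberField.RingOfIntegers ↥E) ↥E) := ⟨_, rfl⟩
  have hζM : ζ ∈ M := hM ▸ FractionalIdeal.mem_coe.mpr hζJ
  have h1M : (1 : ↥E) ∈ M := hM ▸ FractionalIdeal.mem_coe.mpr (hJ (FractionalIdeal.one_mem_one _))
  let ι : M →ₗ[ℤ] ↥E := (Submodule.restrictScalars ℤ M).subtype
  have hι : ∀ x : M, ι x = (x : ↥E) := fun x => rfl
  have hliJ : LinearIndependent ℤ ![(⟨ζ, hζM⟩ : M), ⟨1, h1M⟩] := by
    rw [LinearIndependent.pair_iff]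
    intro s t hst
    have h0 : ((s • ζ + t • (1:↥E) : ↥E) : ℂ) = 0 := by
      have h1 := congrArg ι hst
      rw [map_add, map_smul, map_smul, map_zero, hι, hι] at h1
      rw [show ((⟨ζ, hζM⟩ : M) : ↥E) = ζ from rfl, show ((⟨1, h1M⟩ : M) : ↥E) = 1 from rfl] at h1
      exact_mod_cast congrArg (fun x : ↥E => (x : ℂ)) h1
    rw [show ((s • ζ + t • (1:↥E) : ↥E) : ℂ) = s • z + t • (1:ℂ) by push_cast [hζ]; ring] at h0
    have him := congrArg Complex.im h0
    rw [show (s • z + t • (1:ℂ)).im = s * z.im from by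
      simp [Complex.add_im, Complex.intCast_im]] at him
    have hs : s = 0 := by simpa [hz0] using him
    refine ⟨hs, ?_⟩
    have ht : ((t:ℂ)) = 0 := by rw [hs] at h0; simpa using h0
    exact_mod_cast ht
  have hspJ : ⊤ ≤ Submodule.span ℤ (Set.range ![(⟨ζ, hζM⟩ : M), ⟨1, h1M⟩]) := by
    rintro ⟨x, hx⟩ -
    have hmem : (x : ℂ) ∈ AddSubgroup.closure ({z, 1} : Set ℂ) :=
      (hJz _).mpr ⟨x, FractionalIdeal.mem_coe.mp (hM ▸ hx), rfl⟩
    rw [AddSubgroup.mem_closure_pair] at hmem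
    obtain ⟨m, n, hmn⟩ := hmem
    have ha : (⟨x, hx⟩ : M) = m • ⟨ζ, hζM⟩ + n • ⟨1, h1M⟩ := by
      apply Subtype.ext
      apply hEinj
      have hcoe : ((m • (⟨ζ, hζM⟩ : M) + n • ⟨1, h1M⟩ : M) : ↥E) = m • ζ + n • (1 : ↥E) := by
        have := congrArg ι (rfl : (m • (⟨ζ, hζM⟩ : M) + n • ⟨1, h1M⟩ : M) = _)
        rw [map_add, map_smul, map_smul] at this
        exact this
      show (x : ℂ) = ((((m • (⟨ζ, hζM⟩ : M) + n • ⟨1, h1M⟩ : M) : ↥E)) : ℂ)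
      rw [hcoe, ← hmn]
      push_cast [hζ]
      try ring
    rw [ha]
    refine Submodule.add_mem _ (Submodule.smul_mem _ _ ?_) (Submodule.smul_mem _ _ ?_)
    · exact Submodule.subset_span ⟨0, rfl⟩
    · exact Submodule.subset_span ⟨1, rfl⟩
  let bJ : Module.Basis (Fin 2) ℤ M := Module.Basis.mk hliJ hspJ
  have hbJ0 : ((bJ 0 : ↥E)) = ζ := by rw [show bJ 0 = _ from Module.Basis.mk_apply hliJ hspJ 0]; rfl
  have hbJ1 : ((bJ 1 : ↥E)) = 1 := by rw [show bJ 1 = _ from Module.Basis.mk_apply hliJ hspJ 1]; rfl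
  subst hM
  have key := FractionalIdeal.abs_det_basis_change bO J bJ
  set b' : Module.Basis (Fin 2) ℚ ↥E := bO.localizationLocalization ℚ ℤ⁰ ↥E with hb'
  have hb'0 : b' 0 = (ω : ↥E) := by
    rw [hb', Module.Basis.localizationLocalization_apply, Module.Basis.mk_apply]
    rfl
  have hb'1 : b' 1 = 1 := by
    rw [hb', Module.Basis.localizationLocalization_apply, Module.Basis.mk_apply]
    simp
  have hbJcoe : ((↑) ∘ bJ : Fin 2 → ↥E) = ![ζ, 1] := by
    funext i
    fin_cases i
    · exact hbJ0
    · exact hbJ1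
  set q : ℚ := b'.repr ζ 0 with hq
  set q1 : ℚ := b'.repr ζ 1 with hq1
  have hdet : b'.det ((↑) ∘ bJ) = q := by
    rw [Module.Basis.det_apply, Matrix.det_fin_two, hbJcoe]
    simp only [Module.Basis.toMatrix_apply]
    rw [show (![ζ, (1:↥E)] 1) = b' 1 from hb'1.symm]
    simp [Module.Basis.repr_self, hq, hq1]
  have hrepr : (q • b' 0 + q1 • b' 1 : ↥E) = ζ := by
    have := b'.sum_repr ζ
    rwa [Fin.sum_univ_two] at this
  have hzeq : z = (q : ℂ) * zE + (q1 : ℂ) := by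
    have hc := congrArg (fun x : ↥E => (x : ℂ)) hrepr
    simp only [hb'0, hb'1] at hc
    rw [← hζ, ← hc]
    push_cast [hω]
    simp [Rat.smul_def]
  have himq : z.im = (q : ℝ) * zE.im := by
    rw [hzeq]
    simp [Complex.add_im, Complex.mul_im, Complex.ratCast_im, Complex.ratCast_re]
  have hqval : (q : ℝ) = z.im / zE.im := by
    field_simp [himq]
    exact himq.symm
  have hqpos : (0:ℝ) < (q:ℝ) := by rw [hqval]; positivity
  rw [hdet] at key
  have hfin : (FractionalIdeal.absNorm J : ℝ) = |(q : ℝ)| := by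
    rw [← key]
    push_cast
    ring
  rw [hfin, abs_of_pos hqpos, hqval]
end
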